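/- Let G be a graph, let < be a linear order on V(G), and let r > 0. Suppose that for every vertex v, |wreach_{2r}[G, <, v]| ≤ s. Then the family X = { X_{2r}[G,<,v] : v ∈ V(G) }, where X_{2r}[G,<,v] = { w : v ∈ wreach_{2r}[G,<,w] }, is an r-neighbourhood cover of G of radius at most 2r and maximum degree at most s. -/

import Mathlib

/-- `wreach G k v`: the set consisting of `v` and all vertices `u < v` that are
weakly `k`-accessible from `v`, i.e. joined to `v` by a path of length at most `k`
all of whose vertices are `≥ u`. -/
def wreach {V : Type*} [LinearOrder V] (G : SimpleGraph V) (k : ℕ) (v : V) : Set V :=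
  {u | u = v ∨ (u < v ∧ ∃ p : G.Walk u v, p.length ≤ k ∧ ∀ x ∈ p.support, u ≤ x)}

/-- `Xset G k v = { w : v ∈ wreach G k w }`. -/
def Xset {V : Type*} [LinearOrder V] (G : SimpleGraph V) (k : ℕ) (v : V) : Set V :=
  {w | v ∈ wreach G k w}

/-- If `|wreach_{2r}[G,<,v]| ≤ s` for every vertex `v`, then the
family `{X_{2r}[G,<,v] : v ∈ V(G)}` is an `r`-neighbourhood cover of `G` of radius
at most `2r` and maximum degree at most `s`: every `r`-neighbourhood is contained
in some cluster, every cluster has a centre within distance `2r` (inside the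
cluster) of all its members, and every vertex lies in at most `s` clusters. -/
theorem wreach_neighbourhood_cover {V : Type*} [Fintype V] [LinearOrder V]
    (G : SimpleGraph V) (r s : ℕ) (hr : 0 < r)
    (h : ∀ v, (wreach G (2 * r) v).ncard ≤ s) :
    (∀ v : V, ∃ u : V, {w | G.edist v w ≤ (r : ℕ∞)} ⊆ Xset G (2 * r) u) ∧
    (∀ u : V, ∀ w ∈ Xset G (2 * r) u,
      ∃ p : G.Walk u w, p.length ≤ 2 * r ∧ ∀ x ∈ p.support, x ∈ Xset G (2 * r) u) ∧
    (∀ v : V, {u | v ∈ Xset G (2 * r) u}.ncard ≤ s) := by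
  refine ⟨?_, ?_, ?_⟩
  · intro v
    -- S = ball of radius r around v
    set S : Set V := {w | G.edist v w ≤ (r : ℕ∞)} with hS
    have hSne : S.Nonempty := ⟨v, by simp [hS]⟩
    have hSfin : S.Finite := Set.toFinite _
    obtain ⟨u, huS, humin⟩ : ∃ a ∈ S, ∀ a' ∈ S, id a' ≤ id a → id a = id a' := by
      obtain ⟨a, ha, hmin⟩ := Set.exists_min_image S id hSfin hSne
      exact ⟨a, ha, fun a' ha' hle => le_antisymm (hmin a' ha') hle⟩
    -- extract walk from v to any ball member of length ≤ r, all vertices in S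
    have key : ∀ w ∈ S, ∃ p : G.Walk v w, p.length ≤ r ∧ ∀ x ∈ p.support, x ∈ S := by
      intro w hw
      have hne : G.edist v w ≠ ⊤ := by
        intro ht; simp only [hS, Set.mem_setOf_eq, ht, top_le_iff] at hw
        exact (ENat.coe_ne_top r) hw
      obtain ⟨p, hp⟩ := SimpleGraph.exists_walk_of_edist_ne_top hne
      have hlen : (p.length : ℕ∞) ≤ r := hp ▸ hw
      have hlen' : p.length ≤ r := by exact_mod_cast hlen
      refine ⟨p, hlen', ?_⟩
      intro x hx
      have hxt := p.takeUntil x hx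
      have : G.edist v x ≤ (p.takeUntil x hx).length := SimpleGraph.edist_le _
      have h2 : ((p.takeUntil x hx).length : ℕ∞) ≤ (p.length : ℕ∞) := by
        exact_mod_cast SimpleGraph.Walk.length_takeUntil_le p hx
      exact le_trans this (le_trans h2 (hp ▸ hw))
    refine ⟨u, ?_⟩
    intro w hw
    obtain ⟨q, hqlen, hqS⟩ := key w hw
    obtain ⟨p, hplen, hpS⟩ := key u huS
    by_cases huw : u = w
    · exact Or.inl huw
    · have hule : ∀ x ∈ S, u ≤ x := by
        intro x hx
        by_contra hlt
        push_neg at hlt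
        exact hlt.ne (humin x hx hlt.le).symm
      refine Or.inr ⟨lt_of_le_of_ne (hule w hw) huw, p.reverse.append q, ?_, ?_⟩
      · rw [SimpleGraph.Walk.length_append, SimpleGraph.Walk.length_reverse]
        omega
      · intro x hx
        rcases (SimpleGraph.Walk.mem_support_append_iff p.reverse q).mp hx with hx | hx
        · rw [SimpleGraph.Walk.support_reverse, List.mem_reverse] at hx
          exact hule x (hpS x hx)
        · exact hule x (hqS x hx)
  · intro u w hw
    rcases hw with rfl | ⟨hlt, p, hlen, hsup⟩
    · exact ⟨SimpleGraph.Walk.nil, by simp, by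
        intro x hx
        simp only [SimpleGraph.Walk.support_nil, List.mem_singleton] at hx
        exact hx ▸ Or.inl rfl⟩
    · refine ⟨p, hlen, ?_⟩
      intro x hx
      rcases eq_or_lt_of_le (hsup x hx) with heq | hlt'
      · exact heq ▸ Or.inl rfl
      · refine Or.inr ⟨hlt', p.takeUntil x hx, le_trans (SimpleGraph.Walk.length_takeUntil_le p hx) hlen, ?_⟩
        intro y hy
        exact hsup y (SimpleGraph.Walk.support_takeUntil_subset p hx hy)
  · intro v
    have : {u | v ∈ Xset G (2 * r) u} = wreach G (2 * r) v := rfl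
    rw [this]; exact h v
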